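/- The map ρ makes F2[q_0, q_1, …] a comodule algebra over the doubled-up subalgebra P: (i) ρ(x) lies in the image of P ⊗[F2] M → A ⊗[F2] M for every x ∈ M; (ii) coassociativity holds, (ψ ⊗ id_M) ∘ ρ = (id_A ⊗ ρ) ∘ ρ as maps M → A ⊗[F2] A ⊗[F2] M; and (iii) counitality holds, (ε ⊗ id_M) ∘ ρ = id_M after the canonical identification F2 ⊗[F2] M ≅ M. -/

import Mathlib

open scoped TensorProduct

noncomputable section

abbrev F2 := ZMod 2

/-- The mod-2 dual Steenrod algebra as a polynomial algebra on ξ₁, ξ₂, …. -/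
abbrev A := MvPolynomial {n : ℕ // 1 ≤ n} F2

/-- The generators ξₙ, with the convention ξ₀ = 1. -/
def xi : ℕ → A
  | 0 => 1
  | n + 1 => MvPolynomial.X ⟨n + 1, by omega⟩

/-- The Milnor diagonal ψ(ξₙ) = Σ_{i=0}^{n} ξ_{n−i}^{2^i} ⊗ ξᵢ. -/
def ψ : A →ₐ[F2] A ⊗[F2] A :=
  MvPolynomial.aeval fun v =>
    ∑ i ∈ Finset.range (v.1 + 1), ((xi (v.1 - i)) ^ (2 ^ i)) ⊗ₜ[F2] xi i

/-- The augmentation ε(ξₙ) = 0 for n ≥ 1. -/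
def ε : A →ₐ[F2] F2 := MvPolynomial.aeval fun _ => 0

/-- The doubled-up subalgebra P generated by the ξₙ². -/
def P : Subalgebra F2 A := Algebra.adjoin F2 {x : A | ∃ n, 1 ≤ n ∧ x = xi n ^ 2}

/-- The polynomial algebra F2[q₀, q₁, …]. -/
abbrev M := MvPolynomial ℕ F2

/-- The coaction ρ(qₙ) = Σ_{i=0}^{n} ξ_{n−i}^{2^{i+1}} ⊗ qᵢ. -/
def ρ : M →ₐ[F2] A ⊗[F2] M :=
  MvPolynomial.aeval fun n =>
    ∑ i ∈ Finset.range (n + 1), ((xi (n - i)) ^ (2 ^ (i + 1))) ⊗ₜ[F2] (MvPolynomial.X i : M)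

lemma rho_X (n : ℕ) : ρ (MvPolynomial.X n) =
    ∑ i ∈ Finset.range (n + 1), ((xi (n - i)) ^ (2 ^ (i + 1))) ⊗ₜ[F2] (MvPolynomial.X i : M) :=
  MvPolynomial.aeval_X _ n

lemma psi_xi (k : ℕ) : ψ (xi k) =
    ∑ j ∈ Finset.range (k + 1), ((xi (k - j)) ^ (2 ^ j)) ⊗ₜ[F2] xi j := by
  cases k with
  | zero => simp [xi, Algebra.TensorProduct.one_def]
  | succ k => exact MvPolynomial.aeval_X _ _

lemma eps_xi (k : ℕ) : ε (xi k) = if k = 0 then 1 else 0 := by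
  cases k with
  | zero => simp [xi]
  | succ k => simp [ε, xi]

lemma xi_pow_mem (k i : ℕ) : xi k ^ (2 ^ (i + 1)) ∈ P := by
  cases k with
  | zero =>
    have : xi 0 ^ (2 ^ (i+1)) = 1 := by simp [xi]
    rw [this]; exact one_mem P
  | succ k =>
    have h2 : xi (k+1) ^ 2 ∈ P := Algebra.subset_adjoin ⟨k+1, by omega, rfl⟩
    have : xi (k+1) ^ (2 ^ (i+1)) = (xi (k+1) ^ 2) ^ (2 ^ i) := by
      rw [← pow_mul, pow_succ, mul_comm]
    rw [this]
    exact pow_mem h2 _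

instance : Nontrivial (A ⊗[F2] A) :=
  ((Algebra.TensorProduct.lid F2 F2).toAlgHom.comp
    (Algebra.TensorProduct.map ε ε)).toRingHom.domain_nontrivial

instance : CharP (A ⊗[F2] A) 2 :=
  charP_of_injective_algebraMap (algebraMap F2 (A ⊗[F2] A)).injective 2

instance : ExpChar (A ⊗[F2] A) 2 := .prime Nat.prime_two

lemma coassoc_X (n : ℕ) :
    (Algebra.TensorProduct.assoc F2 F2 F2 A A M).toAlgHom
        ((Algebra.TensorProduct.map ψ (AlgHom.id F2 M)) (ρ (MvPolynomial.X n))) =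
      (Algebra.TensorProduct.map (AlgHom.id F2 A) ρ) (ρ (MvPolynomial.X n)) := by
  rw [rho_X, map_sum, map_sum, map_sum]
  have lhs_term : ∀ i ∈ Finset.range (n+1),
      (Algebra.TensorProduct.assoc F2 F2 F2 A A M).toAlgHom
        ((Algebra.TensorProduct.map ψ (AlgHom.id F2 M))
          (((xi (n - i)) ^ (2 ^ (i + 1))) ⊗ₜ[F2] (MvPolynomial.X i : M))) =
      ∑ j ∈ Finset.range (n + 1 - i),
        ((xi (n - i - j)) ^ (2 ^ (i + j + 1))) ⊗ₜ[F2]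
          (((xi j) ^ (2 ^ (i + 1))) ⊗ₜ[F2] (MvPolynomial.X i : M)) := by
    intro i hi
    rw [Finset.mem_range] at hi
    rw [Algebra.TensorProduct.map_tmul, AlgHom.id_apply, map_pow, psi_xi,
      sum_pow_char_pow 2, TensorProduct.sum_tmul, map_sum]
    rw [show n - i + 1 = n + 1 - i by omega]
    refine Finset.sum_congr rfl fun j hj => ?_
    rw [Algebra.TensorProduct.tmul_pow, ← pow_mul,
      show (2:ℕ) ^ j * 2 ^ (i + 1) = 2 ^ (i + j + 1) by rw [← pow_add]; congr 1; omega,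
      AlgEquiv.toAlgHom_eq_coe, AlgEquiv.coe_algHom, Algebra.TensorProduct.assoc_tmul]
  have rhs_term : ∀ k ∈ Finset.range (n+1),
      (Algebra.TensorProduct.map (AlgHom.id F2 A) ρ)
          (((xi (n - k)) ^ (2 ^ (k + 1))) ⊗ₜ[F2] (MvPolynomial.X k : M)) =
      ∑ i ∈ Finset.range (k + 1),
        ((xi (n - k)) ^ (2 ^ (k + 1))) ⊗ₜ[F2]
          (((xi (k - i)) ^ (2 ^ (i + 1))) ⊗ₜ[F2] (MvPolynomial.X i : M)) := by
    intro k hk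
    rw [Algebra.TensorProduct.map_tmul, AlgHom.id_apply, rho_X, TensorProduct.tmul_sum]
  rw [Finset.sum_congr rfl lhs_term, Finset.sum_congr rfl rhs_term]
  have flip := Finset.sum_range_diag_flip (n+1)
    (fun i j => ((xi (n - i - j)) ^ (2 ^ (i + j + 1))) ⊗ₜ[F2]
          (((xi j) ^ (2 ^ (i + 1))) ⊗ₜ[F2] (MvPolynomial.X i : M)))
  -- flip : ∑ m ∈ range (n+1), ∑ k ∈ range (m+1), f k (m-k) = ∑ m ∈ range (n+1), ∑ k ∈ range (n+1-m), f m k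
  rw [← flip]
  refine Finset.sum_congr rfl fun k hk => Finset.sum_congr rfl fun i hi => ?_
  rw [Finset.mem_range] at hk hi
  congr 3 <;> omega

lemma counit_X (n : ℕ) :
    (Algebra.TensorProduct.lid F2 M).toAlgHom
        ((Algebra.TensorProduct.map ε (AlgHom.id F2 M)) (ρ (MvPolynomial.X n))) =
      MvPolynomial.X n := by
  rw [rho_X, map_sum, map_sum]
  rw [Finset.sum_eq_single n]
  · rw [Algebra.TensorProduct.map_tmul, AlgHom.id_apply, map_pow, Nat.sub_self, eps_xi]
    simp [Algebra.TensorProduct.lid_tmul]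
  · intro i hi hne
    rw [Finset.mem_range] at hi
    rw [Algebra.TensorProduct.map_tmul, AlgHom.id_apply, map_pow, eps_xi,
      if_neg (by omega)]
    simp
  · intro h
    exact absurd (Finset.self_mem_range_succ n) h

set_option synthInstance.maxHeartbeats 1000000 in
lemma rho_mem_range (x : M) :
    ρ x ∈ (Algebra.TensorProduct.map P.val (AlgHom.id F2 M)).range := by
  induction x using MvPolynomial.induction_on with
  | C a =>
    rw [← MvPolynomial.algebraMap_eq, AlgHom.commutes]
    exact Subalgebra.algebraMap_mem _ a
  | add p q hp hq => rw [map_add]; exact add_mem hp hq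
  | mul_X p i hp =>
    rw [map_mul]
    refine mul_mem hp ?_
    rw [rho_X]
    refine Subalgebra.sum_mem _ fun j hj => ?_
    exact ⟨(⟨_, xi_pow_mem (i - j) j⟩ : P) ⊗ₜ[F2] MvPolynomial.X j, rfl⟩


set_option synthInstance.maxHeartbeats 1000000
set_option maxHeartbeats 2000000
/-- ρ makes F2[q₀, q₁, …] a comodule algebra over the doubled-up subalgebra P:
the coaction lands in (the image of) P ⊗ M, is coassociative, and is counital. -/
theorem rho_comodule_algebra :
    (∀ x : M, ρ x ∈
      Submodule.span F2 {z : A ⊗[F2] M | ∃ a ∈ P, ∃ m : M, z = a ⊗ₜ[F2] m}) ∧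
    ((Algebra.TensorProduct.assoc F2 F2 F2 A A M).toAlgHom.comp
        ((Algebra.TensorProduct.map ψ (AlgHom.id F2 M)).comp ρ) =
      (Algebra.TensorProduct.map (AlgHom.id F2 A) ρ).comp ρ) ∧
    ((Algebra.TensorProduct.lid F2 M).toAlgHom.comp
        ((Algebra.TensorProduct.map ε (AlgHom.id F2 M)).comp ρ) = AlgHom.id F2 M) := by
  refine ⟨?_, ?_, ?_⟩
  · intro x
    obtain ⟨y, hy⟩ := rho_mem_range x
    rw [← hy]
    clear hy
    induction y using TensorProduct.induction_on with
    | zero => rw [map_zero]; exact zero_mem _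
    | tmul a m =>
      exact Submodule.subset_span ⟨a, a.2, m, rfl⟩
    | add u v hu hv => rw [map_add]; exact add_mem hu hv
  · exact MvPolynomial.algHom_ext fun n => coassoc_X n
  · exact MvPolynomial.algHom_ext fun n => counit_X n
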